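/- A homogeneous element of degree m of the free associative algebra 𝒜 on X₁,…,Xₙ over a field of characteristic zero is regular (a linear combination of m-th powers of linear forms in the Xᵢ) if and only if, writing it as Σ λ_{i₁…iₘ} X_{i₁}⋯X_{iₘ}, the coefficient function is symmetric: λ_{i_{σ(1)}…i_{σ(m)}} = λ_{i₁…iₘ} for all permutations σ ∈ Σₘ. -/

import Mathlib

open scoped BigOperators

noncomputable section

/-- The word `X₁^{α₁} ⋯ Xₙ^{αₙ}` as a list of generator indices. -/
def word (n : ℕ) (α : Fin n → ℕ) : List (Fin n) :=
  (List.finRange n).flatMap fun i => List.replicate (α i) i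

/-- The symmetrization `symz(X^(α)) = (1/m!) ∑_{σ ∈ Σₘ} X'_{σ(1)} ⋯ X'_{σ(m)}`
of the monomial `X^(α)` in the free associative algebra. -/
def symz (K : Type) [Field K] (n : ℕ) (α : Fin n → ℕ) : FreeAlgebra K (Fin n) :=
  ((Nat.factorial (word n α).length : K))⁻¹ •
    ∑ σ : Equiv.Perm (Fin (word n α).length),
      (List.ofFn fun j => FreeAlgebra.ι K ((word n α).get (σ j))).prod

/-- Regular homogeneous polynomials of degree `m`: the span of `m`-th powers of
linear forms in the generators. -/
def RegHom (K : Type) [Field K] (n m : ℕ) : Submodule K (FreeAlgebra K (Fin n)) :=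
  Submodule.span K {x | ∃ c : Fin n → K, x = (∑ i, c i • FreeAlgebra.ι K i) ^ m}

/-- Regular polynomials: the span of all powers of linear forms in the generators. -/
def Reg (K : Type) [Field K] (n : ℕ) : Submodule K (FreeAlgebra K (Fin n)) :=
  Submodule.span K {x | ∃ (m : ℕ) (c : Fin n → K), x = (∑ i, c i • FreeAlgebra.ι K i) ^ m}

/-- The symmetrization map `Φ` from commutative polynomials to the free algebra,
sending `x^(α)` to `symz(X^(α))` and extended linearly. -/
def Phi (K : Type) [Field K] (n : ℕ) (p : MvPolynomial (Fin n) K) : FreeAlgebra K (Fin n) :=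
  ∑ d ∈ p.support, p.coeff d • symz K n (fun i => d i)

/-! ### Auxiliary machinery -/

/-- The coefficient functional extracting the coefficient of a given word. -/
def coeffL (K : Type) [Field K] (n : ℕ) (g : FreeMonoid (Fin n)) :
    FreeAlgebra K (Fin n) →ₗ[K] K :=
  (Finsupp.lapply g) ∘ₗ (MonoidAlgebra.coeffLinearEquiv K).toLinearMap ∘ₗ (FreeAlgebra.equivMonoidAlgebraFreeMonoid (R := K) (X := Fin n)).toLinearMap

lemma equiv_monomial (K : Type) [Field K] (n : ℕ) (l : List (Fin n)) :
    FreeAlgebra.equivMonoidAlgebraFreeMonoid (R := K) (X := Fin n) ((l.map (FreeAlgebra.ι K)).prod)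
      = MonoidAlgebra.single (FreeMonoid.ofList l) 1 := by
  induction l with
  | nil => simp only [List.map_nil, List.prod_nil, map_one]; exact MonoidAlgebra.one_def
  | cons x l ih =>
    simp only [List.map_cons, List.prod_cons, map_mul, ih]
    have hx : FreeAlgebra.equivMonoidAlgebraFreeMonoid (R := K) (X := Fin n) (FreeAlgebra.ι K x)
        = MonoidAlgebra.single (FreeMonoid.of x) 1 := by
      simp [FreeAlgebra.equivMonoidAlgebraFreeMonoid]
    rw [hx, MonoidAlgebra.single_mul_single, one_mul]
    rfl

lemma coeffL_monomial (K : Type) [Field K] (n : ℕ) {m : ℕ} (w u : Fin m → Fin n) :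
    coeffL K n (FreeMonoid.ofList (List.ofFn u))
      ((List.ofFn fun j => FreeAlgebra.ι K (w j)).prod) = if w = u then 1 else 0 := by
  classical
  have h1 : (List.ofFn fun j => FreeAlgebra.ι K (w j)) = (List.ofFn w).map (FreeAlgebra.ι K) := by
    simp [List.map_ofFn]; rfl
  have key : coeffL K n (FreeMonoid.ofList (List.ofFn u))
      ((List.ofFn fun j => FreeAlgebra.ι K (w j)).prod)
      = (MonoidAlgebra.single (FreeMonoid.ofList (List.ofFn w)) (1:K)).coeff
          (FreeMonoid.ofList (List.ofFn u)) := by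
    show (FreeAlgebra.equivMonoidAlgebraFreeMonoid (R := K) (X := Fin n)
        ((List.ofFn fun j => FreeAlgebra.ι K (w j)).prod)).coeff (FreeMonoid.ofList (List.ofFn u)) = _
    rw [h1, equiv_monomial]
  rw [key, MonoidAlgebra.single_apply]
  have h2 : FreeMonoid.ofList (List.ofFn w) = FreeMonoid.ofList (List.ofFn u) ↔ w = u := by
    constructor
    · intro h
      exact List.ofFn_injective (congrArg FreeMonoid.toList h)
    · rintro rfl; rfl
  simp only [h2]

lemma pow_sum_smul_expand (K : Type) [Field K] (n : ℕ) (c : Fin n → K) (m : ℕ) :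
    (∑ i, c i • FreeAlgebra.ι K i) ^ m
      = ∑ w : Fin m → Fin n, (∏ j, c (w j)) • (List.ofFn fun j => FreeAlgebra.ι K (w j)).prod := by
  induction m with
  | zero => simp
  | succ k ih =>
    rw [pow_succ', ih, Finset.mul_sum]
    rw [← Fintype.sum_equiv (Fin.consEquiv (fun _ : Fin (k+1) => Fin n))
      (fun p => (∏ j, c ((Fin.cons p.1 p.2 : Fin (k+1) → Fin n) j)) •
        (List.ofFn fun j => FreeAlgebra.ι K ((Fin.cons p.1 p.2 : Fin (k+1) → Fin n) j)).prod)
      (fun w => (∏ j, c (w j)) • (List.ofFn fun j => FreeAlgebra.ι K (w j)).prod)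
      (fun p => rfl)]
    rw [Fintype.sum_prod_type]
    simp_rw [Finset.sum_mul]
    rw [Finset.sum_comm]
    refine Finset.sum_congr rfl fun i _ => Finset.sum_congr rfl fun f _ => ?_
    simp only [Fin.prod_univ_succ, Fin.cons_zero, Fin.cons_succ, List.ofFn_succ, List.prod_cons]
    rw [smul_mul_assoc, mul_smul_comm, smul_smul]

/-- Noncommutative expansion of the power of a sub-sum, with indicator. -/
lemma pow_subset_sum_expand (K : Type) [Field K] (n m : ℕ) (w : Fin m → Fin n)
    (s : Finset (Fin m)) (k : ℕ) :
    (∑ j ∈ s, FreeAlgebra.ι K (w j)) ^ k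
      = ∑ f : Fin k → Fin m, if ∀ j, f j ∈ s then
          (List.ofFn fun j => FreeAlgebra.ι K (w (f j))).prod else 0 := by
  classical
  induction k with
  | zero => simp
  | succ k ih =>
    rw [pow_succ', ih, Finset.mul_sum]
    rw [← Fintype.sum_equiv (Fin.consEquiv (fun _ : Fin (k+1) => Fin m))
      (fun p => if ∀ j, (Fin.cons p.1 p.2 : Fin (k+1) → Fin m) j ∈ s then
          (List.ofFn fun j => FreeAlgebra.ι K (w ((Fin.cons p.1 p.2 : Fin (k+1) → Fin m) j))).prod else 0)
      (fun f => if ∀ j, f j ∈ s then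
          (List.ofFn fun j => FreeAlgebra.ι K (w (f j))).prod else 0)
      (fun p => rfl)]
    rw [Fintype.sum_prod_type]
    simp_rw [Finset.sum_mul, mul_ite, mul_zero, Fin.forall_fin_succ, Fin.cons_zero, Fin.cons_succ,
      List.ofFn_succ, List.prod_cons, ite_and, Finset.sum_ite_irrel, Finset.sum_const_zero,
      Finset.sum_ite_mem, Finset.univ_inter]
    rw [Finset.sum_comm]
    refine Finset.sum_congr rfl fun f _ => ?_
    rw [Finset.sum_ite_irrel, Finset.sum_const_zero]
    simp [Fin.cons_zero, Fin.cons_succ]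

lemma ie_sum (K : Type) [Field K] (m : ℕ) (R : Finset (Fin m)) :
    (∑ S : Finset (Fin m), if R ⊆ S then (-1:K)^(m - S.card) else 0)
      = if R = Finset.univ then 1 else 0 := by
  classical
  have key : (∑ S : Finset (Fin m), if R ⊆ S then (-1:K)^(m - S.card) else 0)
      = ∑ T ∈ Rᶜ.powerset, (-1:K)^(Rᶜ.card - T.card) := by
    rw [← Finset.sum_filter]
    refine Finset.sum_nbij' (fun S => S \ R) (fun T => R ∪ T) ?_ ?_ ?_ ?_ ?_
    · intro S hS
      rw [Finset.mem_filter] at hS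
      rw [Finset.mem_powerset]
      intro x hx
      rw [Finset.mem_sdiff] at hx
      simpa [Finset.mem_compl] using hx.2
    · intro T hT
      simp [Finset.subset_union_left]
    · intro S hS
      rw [Finset.mem_filter] at hS
      exact Finset.union_sdiff_of_subset hS.2
    · intro T hT
      rw [Finset.mem_powerset] at hT
      apply Finset.union_sdiff_cancel_left
      exact disjoint_compl_right.mono_right hT
    · intro S hS
      rw [Finset.mem_filter] at hS
      congr 1
      show m - S.card = Rᶜ.card - (S \ R).card
      have h1 : R.card ≤ S.card := Finset.card_le_card hS.2
      have h2 : S.card ≤ m := by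
        simpa using Finset.card_le_univ S
      have h3 : (S \ R).card = S.card - R.card := Finset.card_sdiff_of_subset hS.2
      have h4 : Rᶜ.card = m - R.card := by simp [Finset.card_compl]
      omega
  rw [key]
  by_cases h : R = Finset.univ
  · subst h
    simp
  · have hne : Rᶜ.Nonempty := by
      rw [Finset.nonempty_iff_ne_empty, Ne, Finset.compl_eq_empty_iff]
      exact h
    have hterm : ∀ T ∈ Rᶜ.powerset, (-1:K)^(Rᶜ.card - T.card)
        = (-1)^Rᶜ.card * (-1)^T.card := by
      intro T hT
      have ht : T.card ≤ Rᶜ.card := Finset.card_le_card (Finset.mem_powerset.mp hT)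
      have h2 : ((-1:K)^(Rᶜ.card - T.card)) * (-1)^T.card = (-1)^Rᶜ.card := by
        rw [← pow_add, Nat.sub_add_cancel ht]
      have h3 : ((-1:K)^T.card) * ((-1:K)^T.card) = 1 := by
        rw [← pow_add]
        exact Even.neg_one_pow ⟨T.card, rfl⟩
      calc (-1:K)^(Rᶜ.card - T.card)
          = (-1)^(Rᶜ.card - T.card) * ((-1)^T.card * (-1)^T.card) := by rw [h3, mul_one]
        _ = (-1)^Rᶜ.card * (-1)^T.card := by rw [← mul_assoc, h2]
    rw [Finset.sum_congr rfl hterm, ← Finset.mul_sum]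
    have hz : (∑ T ∈ Rᶜ.powerset, (-1:K)^T.card) = 0 := by
      have hint := Finset.sum_powerset_neg_one_pow_card_of_nonempty hne
      calc (∑ T ∈ Rᶜ.powerset, (-1:K)^T.card)
          = ((∑ T ∈ Rᶜ.powerset, (-1:ℤ)^T.card : ℤ) : K) := by push_cast; rfl
        _ = 0 := by rw [hint]; simp
    rw [hz, mul_zero, if_neg h]

lemma sum_subset_mem_regHom (K : Type) [Field K] (n m : ℕ) (w : Fin m → Fin n)
    (s : Finset (Fin m)) :
    (∑ j ∈ s, FreeAlgebra.ι K (w j)) ^ m ∈ RegHom K n m := by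
  classical
  apply Submodule.subset_span
  refine ⟨fun i => ((s.filter fun j => w j = i).card : K), ?_⟩
  congr 1
  rw [← Finset.sum_fiberwise_of_maps_to (g := fun j => w j) (t := Finset.univ)
    (fun j _ => Finset.mem_univ (w j)) (fun j => FreeAlgebra.ι K (w j))]
  refine Finset.sum_congr rfl fun i _ => ?_
  have h : ∀ j ∈ s.filter (fun j => w j = i), FreeAlgebra.ι K (w j) = FreeAlgebra.ι K i := by
    intro j hj
    rw [(Finset.mem_filter.mp hj).2]
  rw [Finset.sum_congr rfl h, Finset.sum_const, Nat.cast_smul_eq_nsmul]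

lemma polarization (K : Type) [Field K] (n m : ℕ) (w : Fin m → Fin n) :
    (∑ σ : Equiv.Perm (Fin m), (List.ofFn fun j => FreeAlgebra.ι K (w (σ j))).prod)
      ∈ RegHom K n m := by
  classical
  have key : (∑ S : Finset (Fin m),
        (-1:K)^(m - S.card) • (∑ j ∈ S, FreeAlgebra.ι K (w j)) ^ m)
      = ∑ σ : Equiv.Perm (Fin m), (List.ofFn fun j => FreeAlgebra.ι K (w (σ j))).prod := by
    simp_rw [pow_subset_sum_expand K n m w _ m, Finset.smul_sum, smul_ite, smul_zero]
    rw [Finset.sum_comm]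
    have step : ∀ f : Fin m → Fin m,
        (∑ S : Finset (Fin m), if (∀ j, f j ∈ S) then
            (-1:K)^(m - S.card) • (List.ofFn fun j => FreeAlgebra.ι K (w (f j))).prod else 0)
          = (if Function.Surjective f then (1:K) else 0) •
              (List.ofFn fun j => FreeAlgebra.ι K (w (f j))).prod := by
      intro f
      have h1 : ∀ S : Finset (Fin m), (∀ j, f j ∈ S) ↔ Finset.image f Finset.univ ⊆ S := by
        intro S
        rw [Finset.image_subset_iff]
        exact ⟨fun h x _ => h x, fun h j => h j (Finset.mem_univ j)⟩
      simp_rw [h1]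
      have h2 : ∀ S : Finset (Fin m), (if Finset.image f Finset.univ ⊆ S then
            (-1:K)^(m - S.card) • (List.ofFn fun j => FreeAlgebra.ι K (w (f j))).prod else 0)
          = (if Finset.image f Finset.univ ⊆ S then (-1:K)^(m - S.card) else 0) •
              (List.ofFn fun j => FreeAlgebra.ι K (w (f j))).prod := by
        intro S; split <;> simp
      simp_rw [h2]
      rw [← Finset.sum_smul, ie_sum K m]
      have hsurj : (Finset.image f Finset.univ = Finset.univ) ↔ Function.Surjective f := by
        constructor
        · intro h i
          have : i ∈ Finset.image f Finset.univ := by rw [h]; exact Finset.mem_univ i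
          obtain ⟨j, _, hj⟩ := Finset.mem_image.mp this
          exact ⟨j, hj⟩
        · intro h
          apply Finset.eq_univ_of_forall
          intro i
          obtain ⟨j, hj⟩ := h i
          exact Finset.mem_image.mpr ⟨j, Finset.mem_univ j, hj⟩
      rw [if_congr hsurj rfl rfl]
    rw [Finset.sum_congr rfl fun f _ => step f]
    simp_rw [ite_smul, zero_smul, one_smul, ← Finset.sum_filter]
    refine (Finset.sum_bij (fun (σ : Equiv.Perm (Fin m)) _ => (σ : Fin m → Fin m))
      ?_ ?_ ?_ ?_).symm
    · intro σ _
      exact Finset.mem_filter.mpr ⟨Finset.mem_univ _, σ.surjective⟩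
    · intro σ₁ _ σ₂ _ h
      exact Equiv.coe_fn_injective h
    · intro f hf
      have hb : Function.Bijective f :=
        Finite.surjective_iff_bijective.mp (Finset.mem_filter.mp hf).2
      exact ⟨Equiv.ofBijective f hb, Finset.mem_univ _, rfl⟩
    · intro σ _
      rfl
  rw [← key]
  exact Submodule.sum_mem _ fun S _ =>
    Submodule.smul_mem _ _ (sum_subset_mem_regHom K n m w S)

theorem regular_iff_symmetric_coefficients (K : Type) [Field K] [CharZero K]
    (n m : ℕ) (lam : (Fin m → Fin n) → K) :
    (∑ w : Fin m → Fin n, lam w • (List.ofFn fun j => FreeAlgebra.ι K (w j)).prod)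
        ∈ RegHom K n m ↔
      ∀ (w : Fin m → Fin n) (σ : Equiv.Perm (Fin m)), lam (w ∘ σ) = lam w := by
  classical
  constructor
  · intro hmem w σ
    have hco : ∀ u : Fin m → Fin n,
        coeffL K n (FreeMonoid.ofList (List.ofFn u))
          (∑ v : Fin m → Fin n, lam v • (List.ofFn fun j => FreeAlgebra.ι K (v j)).prod)
          = lam u := by
      intro u
      rw [map_sum]
      simp_rw [map_smul, coeffL_monomial K n, smul_eq_mul, mul_ite, mul_one, mul_zero]
      rw [Finset.sum_ite_eq' Finset.univ u lam, if_pos (Finset.mem_univ u)]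
    have hsymm : ∀ y ∈ RegHom K n m, ∀ (u : Fin m → Fin n) (τ : Equiv.Perm (Fin m)),
        coeffL K n (FreeMonoid.ofList (List.ofFn (u ∘ τ))) y
          = coeffL K n (FreeMonoid.ofList (List.ofFn u)) y := by
      intro y hy
      induction hy using Submodule.span_induction with
      | mem x hx =>
        intro u τ
        obtain ⟨c, rfl⟩ := hx
        rw [pow_sum_smul_expand, map_sum, map_sum]
        simp_rw [map_smul, coeffL_monomial K n, smul_eq_mul, mul_ite, mul_one, mul_zero,
          Finset.sum_ite_eq' Finset.univ, if_pos (Finset.mem_univ _)]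
        simpa [Function.comp] using Equiv.prod_comp τ fun j => c (u j)
      | zero => intro u τ; simp
      | add x y _ _ hx hy => intro u τ; simp only [map_add, hx u τ, hy u τ]
      | smul a x _ hx => intro u τ; simp only [map_smul, hx u τ, smul_eq_mul]
    have h1 := hsymm _ hmem w σ
    rwa [hco, hco] at h1
  · intro hs
    have hbij : ∀ σ : Equiv.Perm (Fin m),
        Function.Bijective (fun v : Fin m → Fin n => v ∘ σ) := by
      intro σ
      constructor
      · intro a b hab
        funext j
        simpa using congrFun hab (σ.symm j)
      · intro g
        refine ⟨g ∘ ⇑σ.symm, ?_⟩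
        funext j
        simp
    have hfix : ∀ σ : Equiv.Perm (Fin m),
        (∑ v : Fin m → Fin n, lam v • (List.ofFn fun j => FreeAlgebra.ι K (v (σ j))).prod)
          = ∑ v : Fin m → Fin n, lam v • (List.ofFn fun j => FreeAlgebra.ι K (v j)).prod := by
      intro σ
      refine Fintype.sum_bijective _ (hbij σ)
        (fun v => lam v • (List.ofFn fun j => FreeAlgebra.ι K (v (σ j))).prod)
        (fun v => lam v • (List.ofFn fun j => FreeAlgebra.ι K (v j)).prod) ?_
      intro v
      show lam v • (List.ofFn fun j => FreeAlgebra.ι K (v (σ j))).prod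
        = lam (v ∘ ⇑σ) • (List.ofFn fun j => FreeAlgebra.ι K ((v ∘ ⇑σ) j)).prod
      rw [hs v σ]
      rfl
    have key : (∑ v : Fin m → Fin n, lam v •
          (∑ σ : Equiv.Perm (Fin m), (List.ofFn fun j => FreeAlgebra.ι K (v (σ j))).prod))
        = (Nat.factorial m : K) •
          ∑ v : Fin m → Fin n, lam v • (List.ofFn fun j => FreeAlgebra.ι K (v j)).prod := by
      calc (∑ v : Fin m → Fin n, lam v •
            (∑ σ : Equiv.Perm (Fin m), (List.ofFn fun j => FreeAlgebra.ι K (v (σ j))).prod))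
          = ∑ v : Fin m → Fin n, ∑ σ : Equiv.Perm (Fin m),
              lam v • (List.ofFn fun j => FreeAlgebra.ι K (v (σ j))).prod := by
            simp_rw [Finset.smul_sum]
        _ = ∑ σ : Equiv.Perm (Fin m), ∑ v : Fin m → Fin n,
              lam v • (List.ofFn fun j => FreeAlgebra.ι K (v (σ j))).prod := Finset.sum_comm
        _ = ∑ _σ : Equiv.Perm (Fin m), ∑ v : Fin m → Fin n,
              lam v • (List.ofFn fun j => FreeAlgebra.ι K (v j)).prod :=
            Finset.sum_congr rfl fun σ _ => hfix σ
        _ = (Fintype.card (Equiv.Perm (Fin m))) •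
              ∑ v : Fin m → Fin n, lam v • (List.ofFn fun j => FreeAlgebra.ι K (v j)).prod := by
            rw [Finset.sum_const, Finset.card_univ]
        _ = (Nat.factorial m : K) •
              ∑ v : Fin m → Fin n, lam v • (List.ofFn fun j => FreeAlgebra.ι K (v j)).prod := by
            rw [Fintype.card_perm, Fintype.card_fin, Nat.cast_smul_eq_nsmul]
    have hfac : (Nat.factorial m : K) ≠ 0 := Nat.cast_ne_zero.mpr (Nat.factorial_ne_zero m)
    have hx : (∑ v : Fin m → Fin n, lam v • (List.ofFn fun j => FreeAlgebra.ι K (v j)).prod)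
        = (Nat.factorial m : K)⁻¹ • ∑ v : Fin m → Fin n, lam v •
            (∑ σ : Equiv.Perm (Fin m), (List.ofFn fun j => FreeAlgebra.ι K (v (σ j))).prod) := by
      rw [key, smul_smul, inv_mul_cancel₀ hfac, one_smul]
    rw [hx]
    exact Submodule.smul_mem _ _ (Submodule.sum_mem _ fun v _ =>
      Submodule.smul_mem _ _ (polarization K n m v))

end
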